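/- For i ∈ {1,…,5}, let Tᵢ(X) be the linear form in X₁,…,X₅ given by the determinant of the 4×4 matrix whose columns, indexed by j ∈ {1,…,5}∖{i} in increasing order, are (1, xⱼ, xⱼ², Xⱼ), and let a_{ij} ∈ ℂ[x₁,…,x₅] be the coefficient of Xⱼ in Tᵢ. Then the identity of polynomials a₁₂·a₂₁·T₃(X) = a₂₁·a₃₂·T₁(X) + a₁₂·a₃₁·T₂(X) holds in ℂ[x₁,…,x₅, X₁,…,X₅]. -/

import Mathlib

set_option maxHeartbeats 4000000


/-- The linear form `Tᵢ(X)` defining the tritangent plane `t_{i6}`: the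
determinant of the 4×4 matrix whose columns, indexed by `j ≠ i` in increasing
order (via `Fin.succAbove`), are `(1, xⱼ, xⱼ², Xⱼ)`. -/
noncomputable def Tform (x : Fin 5 → ℂ) (i : Fin 5) (X : Fin 5 → ℂ) : ℂ :=
  Matrix.det (Matrix.of fun (r c : Fin 4) =>
    ![(1 : ℂ), x (i.succAbove c), x (i.succAbove c) ^ 2, X (i.succAbove c)] r)

/-- With `a i j` the coefficient of `Xⱼ` in `Tᵢ`, the pencil relation
`a₁₂·a₂₁·T₃(X) = a₂₁·a₃₂·T₁(X) + a₁₂·a₃₁·T₂(X)` holds identically. -/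
theorem tritangent_pencil_relation (x : Fin 5 → ℂ) (a : Fin 5 → Fin 5 → ℂ)
    (ha : ∀ (i : Fin 5) (X : Fin 5 → ℂ), Tform x i X = ∑ j, a i j * X j)
    (X : Fin 5 → ℂ) :
    a 0 1 * a 1 0 * Tform x 2 X =
      a 1 0 * a 2 1 * Tform x 0 X + a 0 1 * a 2 0 * Tform x 1 X := by
  have hA : ∀ i j : Fin 5, a i j = Tform x i (Pi.single j 1) := by
    intro i j
    rw [ha]
    simp [Pi.single_apply, mul_ite]
  rw [hA 0 1, hA 1 0, hA 2 1, hA 2 0]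
  simp only [Tform, Matrix.det_succ_row_zero, Fin.sum_univ_succ,
    Finset.univ_eq_empty, Finset.sum_empty, Matrix.submatrix_apply,
    Matrix.of_apply, Matrix.cons_val', Matrix.cons_val_zero, Matrix.cons_val_one,
    Matrix.head_cons, Matrix.head_fin_const, Fin.succAbove, Fin.lt_def,
    Pi.single_apply, Matrix.cons_val_fin_one, Matrix.cons_val_succ]
  simp (config := {decide := true})
  ring
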